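/- (Theorem 3, deterministic form.) Let s ∈ {0,1}^N with level sets S₀ = {i : s_i = 0} and S₁ = {i : s_i = 1} both nonempty, let X ∈ ℝ^{N×F} with rows x_i ∈ ℝ^F, let σ > 0, λ > 0, c > 0, and let w* ∈ ℝ^F satisfy ‖w*‖ ≤ c/λ. Define s̄ = ‖(I − (1/N)𝟙𝟙ᵀ) s‖₂, the column means X̄_f = (1/N) Σ_i X_{if}, the correlation vector ρ ∈ ℝ^F by ρ_f = (1 / (s̄ σ √N)) Σ_{i=1}^N (s_i − |S₁|/N)(X_{if} − X̄_f), and the statistical-parity gap Δ_SP^raw = | (1/|S₀|) Σ_{i ∈ S₀} ⟨x_i, w*⟩ − (1/|S₁|) Σ_{j ∈ S₁} ⟨x_j, w*⟩ |. Then Δ_SP^raw ≤ ( c N^{3/2} s̄ σ / (|S₀| |S₁| λ) ) · ‖ρ‖₂. -/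

import Mathlib

open scoped BigOperators InnerProductSpace

/-- Theorem 3, deterministic form: the statistical-parity gap of
the linear predictor `w*` with `‖w*‖ ≤ c/λ` is bounded by
`c N^{3/2} s̄ σ / (|S₀||S₁| λ) · ‖ρ‖₂`. -/
theorem statistical_parity_correlation_bound
    (N F : ℕ) (hN : 0 < N) (hF : 0 < F)
    (s : Fin N → ℝ) (hs : ∀ i, s i = 0 ∨ s i = 1)
    (S₀ S₁ : Finset (Fin N))
    (hS₀ : S₀ = Finset.univ.filter fun i => s i = 0)
    (hS₁ : S₁ = Finset.univ.filter fun i => s i = 1)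
    (hS₀ne : S₀.Nonempty) (hS₁ne : S₁.Nonempty)
    (X : Fin N → EuclideanSpace ℝ (Fin F))
    (σ lam c : ℝ) (hσ : 0 < σ) (hlam : 0 < lam) (hc : 0 < c)
    (wstar : EuclideanSpace ℝ (Fin F)) (hw : ‖wstar‖ ≤ c / lam)
    -- `s̄ = ‖(I − (1/N)𝟙𝟙ᵀ)s‖₂`, the norm of the centered sensitive attribute
    (scent : EuclideanSpace ℝ (Fin N))
    (hscent : ∀ i, scent i = s i - (1 / (N : ℝ)) * ∑ j, s j)
    (sbar : ℝ) (hsbar : sbar = ‖scent‖)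
    -- the correlation vector `ρ`
    (ρ : EuclideanSpace ℝ (Fin F))
    (hρ : ∀ f, ρ f = (1 / (sbar * σ * Real.sqrt N)) *
      ∑ i, (s i - (S₁.card : ℝ) / N) * (X i f - (∑ j, X j f) / N))
    -- the statistical-parity gap of the raw predictions
    (ΔSP : ℝ)
    (hΔSP : ΔSP = |(∑ i ∈ S₀, ⟪X i, wstar⟫_ℝ) / S₀.card -
      (∑ j ∈ S₁, ⟪X j, wstar⟫_ℝ) / S₁.card|) :
    ΔSP ≤ c * (N : ℝ) ^ ((3 : ℝ) / 2) * sbar * σ / (S₀.card * S₁.card * lam) * ‖ρ‖ := by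
  have hNpos : (0:ℝ) < N := by exact_mod_cast hN
  set n0 : ℝ := (S₀.card : ℝ) with hn0
  set n1 : ℝ := (S₁.card : ℝ) with hn1
  have hn0pos : 0 < n0 := Nat.cast_pos.mpr (Finset.card_pos.mpr hS₀ne)
  have hn1pos : 0 < n1 := Nat.cast_pos.mpr (Finset.card_pos.mpr hS₁ne)
  have hs0 : ∀ i ∈ S₀, s i = 0 := by
    intro i hi; rw [hS₀] at hi; simpa using hi
  have hs1 : ∀ i ∈ S₁, s i = 1 := by
    intro i hi; rw [hS₁] at hi; simpa using hi
  have hS₁' : S₁ = Finset.univ.filter fun i => ¬ s i = 0 := by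
    rw [hS₁]; ext i
    simp only [Finset.mem_filter, Finset.mem_univ, true_and]
    rcases hs i with h | h <;> simp [h]
  have hsplit : ∀ g : Fin N → ℝ, ∑ i, g i = ∑ i ∈ S₀, g i + ∑ i ∈ S₁, g i := by
    intro g
    rw [hS₀, hS₁', Finset.sum_filter_add_sum_filter_not]
  have hsum : ∑ j, s j = n1 := by
    rw [hsplit, Finset.sum_congr rfl hs0, Finset.sum_congr rfl hs1]
    simp [hn1]
  have hcardN : n0 + n1 = N := by
    have := hsplit (fun _ => (1:ℝ))
    simp [hn0, hn1] at this ⊢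
    linarith
  -- sbar positive
  have hsbarpos : 0 < sbar := by
    obtain ⟨i, hi⟩ := hS₁ne
    have h1 : scent i = n0 / N := by
      rw [hscent i, hsum, hs1 i hi]
      field_simp
      linarith
    have hne : scent ≠ 0 := by
      intro h
      have : scent i = 0 := by rw [h]; rfl
      rw [h1] at this
      have := div_pos hn0pos hNpos
      linarith
    rw [hsbar]
    exact norm_pos_iff.mpr hne
  have hsqrtpos : 0 < Real.sqrt N := Real.sqrt_pos.mpr hNpos
  set r : ℝ := Real.sqrt N with hr
  have hrr : r * r = N := Real.mul_self_sqrt hNpos.le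
  -- key computation of the inner sum
  have hTf : ∀ f, ∑ i, (s i - n1 / N) * (X i f - (∑ j, X j f) / N)
      = -(n1/N) * ∑ i ∈ S₀, X i f + (n0/N) * ∑ i ∈ S₁, X i f := by
    intro f
    have hzero : ∑ i, (s i - n1 / N) = 0 := by
      rw [Finset.sum_sub_distrib, hsum, Finset.sum_const]
      simp
      field_simp
      ring
    have step1 : ∑ i, (s i - n1 / N) * (X i f - (∑ j, X j f) / N)
        = ∑ i, (s i - n1 / N) * X i f := by
      simp only [mul_sub, Finset.sum_sub_distrib, ← Finset.sum_mul, hzero]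
      ring
    rw [step1, hsplit (fun i => (s i - n1 / N) * X i f)]
    have e0 : ∑ i ∈ S₀, (s i - n1 / N) * X i f = -(n1/N) * ∑ i ∈ S₀, X i f := by
      rw [Finset.mul_sum]
      refine Finset.sum_congr rfl fun i hi => ?_
      rw [hs0 i hi]; ring
    have e1 : ∑ i ∈ S₁, (s i - n1 / N) * X i f = (n0/N) * ∑ i ∈ S₁, X i f := by
      rw [Finset.mul_sum]
      refine Finset.sum_congr rfl fun i hi => ?_
      rw [hs1 i hi]
      have : (1:ℝ) - n1 / N = n0 / N := by
        field_simp; linarith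
      rw [this]
    rw [e0, e1]
  set coef : ℝ := N * r * sbar * σ / (n0 * n1) with hcoef
  have hkeyf : ∀ f, (∑ i ∈ S₀, X i f) / n0 - (∑ j ∈ S₁, X j f) / n1
      = -coef * ρ f := by
    intro f
    rw [hρ f, hTf f, hcoef]
    have hNrr : (N : ℝ) = r * r := hrr.symm
    rw [hNrr]
    field_simp
    ring
  -- main identity on inner products
  have hswap : ∀ (T : Finset (Fin N)), ∑ i ∈ T, ⟪X i, wstar⟫_ℝ
      = ∑ f, (∑ i ∈ T, X i f) * wstar f := by
    intro T
    simp only [PiLp.inner_apply, RCLike.inner_apply, conj_trivial, Finset.sum_mul]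
    rw [Finset.sum_comm]
    exact Finset.sum_congr rfl fun _ _ => Finset.sum_congr rfl fun _ _ => mul_comm _ _
  have hmain : (∑ i ∈ S₀, ⟪X i, wstar⟫_ℝ) / n0 - (∑ j ∈ S₁, ⟪X j, wstar⟫_ℝ) / n1
      = -coef * ⟪ρ, wstar⟫_ℝ := by
    rw [hswap S₀, hswap S₁]
    have : ⟪ρ, wstar⟫_ℝ = ∑ f, ρ f * wstar f := by
      simp [PiLp.inner_apply, RCLike.inner_apply]
      exact Finset.sum_congr rfl fun _ _ => mul_comm _ _
    rw [this, Finset.mul_sum, div_eq_mul_inv, div_eq_mul_inv, Finset.sum_mul,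
      Finset.sum_mul, ← Finset.sum_sub_distrib]
    refine Finset.sum_congr rfl fun f _ => ?_
    have h2 : (∑ i ∈ S₀, X i f) * n0⁻¹ - (∑ j ∈ S₁, X j f) * n1⁻¹
        = -coef * ρ f := by
      rw [← div_eq_mul_inv, ← div_eq_mul_inv]; exact hkeyf f
    linear_combination wstar f * h2
  have hcoefpos : 0 < coef := by
    rw [hcoef]
    positivity
  have hΔ : ΔSP = coef * |⟪ρ, wstar⟫_ℝ| := by
    rw [hΔSP, hmain, abs_mul, abs_neg, abs_of_pos hcoefpos]
  have hinner : |⟪ρ, wstar⟫_ℝ| ≤ ‖ρ‖ * (c / lam) := by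
    calc |⟪ρ, wstar⟫_ℝ| ≤ ‖ρ‖ * ‖wstar‖ := abs_real_inner_le_norm ρ wstar
      _ ≤ ‖ρ‖ * (c / lam) := by
        exact mul_le_mul_of_nonneg_left hw (norm_nonneg ρ)
  have hpow : (N:ℝ) ^ ((3:ℝ)/2) = N * r := by
    rw [hr, Real.sqrt_eq_rpow]
    nth_rewrite 1 [show ((3:ℝ)/2) = 1 + 1/2 by norm_num]
    rw [Real.rpow_add hNpos, Real.rpow_one]
  rw [hΔ, hpow]
  calc coef * |⟪ρ, wstar⟫_ℝ| ≤ coef * (‖ρ‖ * (c / lam)) :=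
        mul_le_mul_of_nonneg_left hinner hcoefpos.le
    _ = c * ((N:ℝ) * r) * sbar * σ / (n0 * n1 * lam) * ‖ρ‖ := by
        rw [hcoef]; field_simp
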